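/- Relative smoothness of KL(Ax, b): f(x) = Σᵢ [(Ax)ᵢ ln((Ax)ᵢ/bᵢ) − (Ax)ᵢ + bᵢ] is ‖A‖₁-smooth relative to the negative entropy φ(x) = Σⱼ (xⱼ ln xⱼ − xⱼ) on ℝⁿ_{++}, i.e., ‖A‖₁·φ − f is convex on ℝⁿ_{++}. -/

import Mathlib

open Matrix

-- two-term log-sum inequality
lemma logsum2 {p1 p2 q1 q2 : ℝ} (hp1 : 0 < p1) (hp2 : 0 < p2) (hq1 : 0 < q1) (hq2 : 0 < q2) :
    (p1 + p2) * Real.log ((p1 + p2) / (q1 + q2)) ≤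
      p1 * Real.log (p1 / q1) + p2 * Real.log (p2 / q2) := by
  have hq : 0 < q1 + q2 := by linarith
  have h := Real.convexOn_mul_log.2 (Set.mem_Ici.mpr (le_of_lt (div_pos hp1 hq1)))
    (Set.mem_Ici.mpr (le_of_lt (div_pos hp2 hq2)))
    (div_nonneg hq1.le hq.le) (div_nonneg hq2.le hq.le)
    (show q1 / (q1 + q2) + q2 / (q1 + q2) = 1 by field_simp)
  have hpt : (q1 / (q1 + q2)) • (p1 / q1) + (q2 / (q1 + q2)) • (p2 / q2)
      = (p1 + p2) / (q1 + q2) := by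
    rw [smul_eq_mul, smul_eq_mul, div_mul_div_comm, div_mul_div_comm, mul_comm q1 p1,
      mul_comm q2 p2, mul_div_mul_right _ _ hq1.ne', mul_div_mul_right _ _ hq2.ne', ← add_div]
  rw [hpt] at h
  have h2 := mul_le_mul_of_nonneg_left h (le_of_lt hq)
  calc (p1 + p2) * Real.log ((p1 + p2) / (q1 + q2))
      = (q1 + q2) * ((p1 + p2) / (q1 + q2) * Real.log ((p1 + p2) / (q1 + q2))) := by
        field_simp
    _ ≤ (q1 + q2) * ((q1 / (q1 + q2)) • (p1 / q1 * Real.log (p1 / q1)) +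
        (q2 / (q1 + q2)) • (p2 / q2 * Real.log (p2 / q2))) := h2
    _ = p1 * Real.log (p1 / q1) + p2 * Real.log (p2 / q2) := by
        simp only [smul_eq_mul]
        field_simp

-- joint convexity of the KL kernel (p, q) ↦ p * log (p / q)
lemma convexOn_klKernel :
    ConvexOn ℝ (Set.Ioi (0:ℝ) ×ˢ Set.Ioi (0:ℝ)) (fun p : ℝ × ℝ => p.1 * Real.log (p.1 / p.2)) := by
  constructor
  · exact (convex_Ioi 0).prod (convex_Ioi 0)
  intro x hx y hy a b ha hb hab
  rcases eq_or_lt_of_le ha with rfl | ha'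
  · simp at hab; simp [hab]
  rcases eq_or_lt_of_le hb with rfl | hb'
  · simp at hab; simp [hab]
  simp only [Set.mem_prod, Set.mem_Ioi] at hx hy
  have key := logsum2 (mul_pos ha' hx.1) (mul_pos hb' hy.1) (mul_pos ha' hx.2) (mul_pos hb' hy.2)
  have e1 : a * x.1 / (a * x.2) = x.1 / x.2 := mul_div_mul_left _ _ (ne_of_gt ha')
  have e2 : b * y.1 / (b * y.2) = y.1 / y.2 := mul_div_mul_left _ _ (ne_of_gt hb')
  rw [e1, e2] at key
  simp only [Prod.smul_fst, Prod.smul_snd, Prod.fst_add, Prod.snd_add, smul_eq_mul]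
  calc (a * x.1 + b * y.1) * Real.log ((a * x.1 + b * y.1) / (a * x.2 + b * y.2))
      ≤ a * x.1 * Real.log (x.1 / x.2) + b * y.1 * Real.log (y.1 / y.2) := key
    _ = a * (x.1 * Real.log (x.1 / x.2)) + b * (y.1 * Real.log (y.1 / y.2)) := by ring

-- a finite sum of convex functions is convex
lemma convexOn_finset_sum {E : Type*} [AddCommGroup E] [Module ℝ E] {s : Set E} (hs : Convex ℝ s)
    {ι : Type*} (t : Finset ι) {f : ι → E → ℝ} (h : ∀ i ∈ t, ConvexOn ℝ s (f i)) :
    ConvexOn ℝ s (fun x => ∑ i ∈ t, f i x) := by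
  classical
  induction t using Finset.cons_induction with
  | empty => simpa using convexOn_const 0 hs
  | cons i t hi ih =>
    simp only [Finset.sum_cons]
    exact (h i (Finset.mem_cons_self i t)).add (ih fun j hj => h j (Finset.mem_cons_of_mem hj))

theorem klAxb_rel_smooth_neg_entropy {m n : ℕ} [NeZero n]
    (A : Matrix (Fin m) (Fin n) ℝ) (hA : ∀ i j, 0 ≤ A i j)
    (hrows : ∀ i, ∃ j, A i j ≠ 0)
    (b : Fin m → ℝ) (hb : ∀ i, 0 < b i) :
    ConvexOn ℝ {x : Fin n → ℝ | ∀ j, 0 < x j}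
      (fun x =>
        (Finset.univ.sup' Finset.univ_nonempty (fun j => ∑ i, |A i j|)) *
            (∑ j, (x j * Real.log (x j) - x j)) -
          ∑ i, (A.mulVec x i * Real.log (A.mulVec x i / b i) - A.mulVec x i + b i)) := by
  classical
  set s : Set (Fin n → ℝ) := {x | ∀ j, 0 < x j} with hs_def
  set L : ℝ := Finset.univ.sup' Finset.univ_nonempty (fun j => ∑ i, |A i j|) with hL_def
  have hs : Convex ℝ s := by
    have : s = Set.pi Set.univ (fun _ : Fin n => Set.Ioi (0:ℝ)) := by
      ext x; simp [Set.mem_pi, hs_def]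
    rw [this]
    exact convex_pi fun _ _ => convex_Ioi 0
  have habs : ∀ j, (∑ i, |A i j|) = ∑ i, A i j := by
    intro j; exact Finset.sum_congr rfl fun i _ => abs_of_nonneg (hA i j)
  have hcL : ∀ j, (∑ i, A i j) ≤ L := by
    intro j
    rw [← habs j, hL_def]
    exact Finset.le_sup' (fun j => ∑ i : Fin m, |A i j|) (Finset.mem_univ j)
  have hmv : ∀ x, ∀ i, A.mulVec x i = ∑ j, A i j * x j := by
    intro x i; simp [Matrix.mulVec, dotProduct]
  have hAx : ∀ x ∈ s, ∀ i, 0 < A.mulVec x i := by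
    intro x hx i
    rw [hmv]
    obtain ⟨j0, hj0⟩ := hrows i
    refine Finset.sum_pos' (fun j _ => mul_nonneg (hA i j) (hx j).le) ⟨j0, Finset.mem_univ j0, ?_⟩
    exact mul_pos (lt_of_le_of_ne (hA i j0) (Ne.symm hj0)) (hx j0)
  -- the convex decomposition
  set G : (Fin n → ℝ) → ℝ := fun x =>
    (∑ j, (L - ∑ i, A i j) * (x j * Real.log (x j) - x j))
      + (∑ i, ∑ j, A i j * (x j * Real.log (x j / A.mulVec x i)))
      + ((∑ i, A.mulVec x i * Real.log (b i)) - ∑ i, b i) with hG_def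
  have hG : ConvexOn ℝ s G := by
    apply ConvexOn.add
    apply ConvexOn.add
    · -- ∑ⱼ (L - cⱼ) (xⱼ log xⱼ - xⱼ)
      refine convexOn_finset_sum hs _ (fun j _ => ?_)
      have h1 : ConvexOn ℝ s (fun x : Fin n → ℝ => x j * Real.log (x j)) := by
        have := Real.convexOn_mul_log.comp_affineMap
          ((LinearMap.proj j : (Fin n → ℝ) →ₗ[ℝ] ℝ).toAffineMap)
        refine this.subset (fun x hx => ?_) hs
        simp only [Set.mem_preimage]
        exact Set.mem_Ici.mpr (hx j).le
      have h2 : ConvexOn ℝ s (fun x : Fin n → ℝ => -x j) :=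
        (-(LinearMap.proj j : (Fin n → ℝ) →ₗ[ℝ] ℝ)).convexOn hs
      have h3 := (h1.add h2).smul (sub_nonneg.mpr (hcL j))
      refine h3.congr (fun x _ => ?_)
      simp only [Pi.add_apply, smul_eq_mul]
      ring
    · -- ∑ᵢ ∑ⱼ Aᵢⱼ xⱼ log(xⱼ / (Ax)ᵢ)
      refine convexOn_finset_sum hs _ (fun i _ => ?_)
      refine convexOn_finset_sum hs _ (fun j _ => ?_)
      have hk : ConvexOn ℝ s (fun x : Fin n → ℝ => x j * Real.log (x j / A.mulVec x i)) := by
        have := convexOn_klKernel.comp_affineMap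
          (((LinearMap.proj j : (Fin n → ℝ) →ₗ[ℝ] ℝ).prod
            ((LinearMap.proj i : (Fin m → ℝ) →ₗ[ℝ] ℝ).comp A.mulVecLin)).toAffineMap)
        refine (this.subset (fun x hx => ?_) hs).congr (fun x _ => ?_)
        · simp only [Set.mem_preimage, LinearMap.coe_toAffineMap, Function.comp_apply,
            LinearMap.prod_apply, Pi.prod, LinearMap.coe_comp, LinearMap.proj_apply,
            Matrix.mulVecLin_apply, Set.mem_prod, Set.mem_Ioi]
          exact ⟨hx j, hAx x hx i⟩
        · simp [Matrix.mulVecLin_apply]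
      have := hk.smul (hA i j)
      refine this.congr (fun x _ => ?_)
      simp
    · -- affine part
      have h1 : ConvexOn ℝ s (fun x : Fin n → ℝ => ∑ i, A.mulVec x i * Real.log (b i)) := by
        have := (∑ i : Fin m, (Real.log (b i)) •
          ((LinearMap.proj i : (Fin m → ℝ) →ₗ[ℝ] ℝ).comp A.mulVecLin)).convexOn hs
        refine this.congr (fun x _ => ?_)
        simp [LinearMap.sum_apply, Matrix.mulVecLin_apply, mul_comm]
      exact h1.add_const _
  refine hG.congr (fun x hx => ?_)
  -- pointwise equality on s
  have hxpos : ∀ j, 0 < x j := hx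
  have htpos : ∀ i, 0 < A.mulVec x i := hAx x hx
  have elog1 : ∀ i j, Real.log (x j / A.mulVec x i)
      = Real.log (x j) - Real.log (A.mulVec x i) := fun i j =>
    Real.log_div (hxpos j).ne' (htpos i).ne'
  have elog2 : ∀ i, Real.log (A.mulVec x i / b i)
      = Real.log (A.mulVec x i) - Real.log (b i) := fun i =>
    Real.log_div (htpos i).ne' (hb i).ne'
  have key1 : ∑ i, ∑ j, A i j * (x j * Real.log (x j))
      = ∑ j, (∑ i, A i j) * (x j * Real.log (x j)) := by
    rw [Finset.sum_comm]
    exact Finset.sum_congr rfl fun j _ => by rw [Finset.sum_mul]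
  have key2 : ∀ i, ∑ j, A i j * (x j * Real.log (A.mulVec x i))
      = A.mulVec x i * Real.log (A.mulVec x i) := by
    intro i
    rw [hmv x i, Finset.sum_mul]
    exact Finset.sum_congr rfl fun j _ => by ring
  have key3 : ∑ j, (∑ i, A i j) * x j = ∑ i, A.mulVec x i := by
    have h1 : ∑ i, A.mulVec x i = ∑ i, ∑ j, A i j * x j :=
      Finset.sum_congr rfl fun i _ => hmv x i
    rw [h1, Finset.sum_comm]
    exact Finset.sum_congr rfl fun j _ => Finset.sum_mul _ _ _
  have mid : ∀ i, ∑ j, A i j * (x j * Real.log (x j / A.mulVec x i))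
      = (∑ j, A i j * (x j * Real.log (x j))) - A.mulVec x i * Real.log (A.mulVec x i) := by
    intro i
    rw [← key2 i, ← Finset.sum_sub_distrib]
    exact Finset.sum_congr rfl fun j _ => by rw [elog1 i j]; ring
  have mid2 : ∑ i, ∑ j, A i j * (x j * Real.log (x j / A.mulVec x i))
      = (∑ j, (∑ i, A i j) * (x j * Real.log (x j)))
        - ∑ i, A.mulVec x i * Real.log (A.mulVec x i) := by
    simp only [mid]
    rw [Finset.sum_sub_distrib, key1]
  have first : ∑ j, (L - ∑ i, A i j) * (x j * Real.log (x j) - x j)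
      = L * (∑ j, (x j * Real.log (x j) - x j))
        - (∑ j, (∑ i, A i j) * (x j * Real.log (x j))) + ∑ j, (∑ i, A i j) * x j := by
    calc ∑ j, (L - ∑ i, A i j) * (x j * Real.log (x j) - x j)
        = ∑ j, (L * (x j * Real.log (x j) - x j)
            - ((∑ i, A i j) * (x j * Real.log (x j)) - (∑ i, A i j) * x j)) :=
          Finset.sum_congr rfl fun j _ => by ring
      _ = (∑ j, L * (x j * Real.log (x j) - x j))
            - ((∑ j, (∑ i, A i j) * (x j * Real.log (x j))) - ∑ j, (∑ i, A i j) * x j) := by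
          rw [Finset.sum_sub_distrib, Finset.sum_sub_distrib]
      _ = _ := by rw [← Finset.mul_sum]; ring
  have last : ∑ i, (A.mulVec x i * Real.log (A.mulVec x i / b i) - A.mulVec x i + b i)
      = (∑ i, A.mulVec x i * Real.log (A.mulVec x i))
        - (∑ i, A.mulVec x i * Real.log (b i)) - (∑ i, A.mulVec x i) + ∑ i, b i := by
    calc ∑ i, (A.mulVec x i * Real.log (A.mulVec x i / b i) - A.mulVec x i + b i)
        = ∑ i, (A.mulVec x i * Real.log (A.mulVec x i)
            - A.mulVec x i * Real.log (b i) - A.mulVec x i + b i) :=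
          Finset.sum_congr rfl fun i _ => by rw [elog2 i]; ring
      _ = _ := by
          simp only [Finset.sum_add_distrib, Finset.sum_sub_distrib]
  simp only [hG_def]
  rw [first, mid2, last, key3]
  ring
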